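/- Antitonicity of the limiting sample count s(λ) (property 2 of s(λ) in the proof of Theorem 4.1): Suppose |r i| ≤ C and 0 ≤ t i ≤ M for all i. For ε > 0 and λ > 0 let Opt(ε, λ) = {i : ι | ∀ j, r i - λ * t i ≥ r j - λ * t j - ε}, let S(ε, λ) = sSup (t '' Opt(ε, λ)), and define s(λ) as the limsup of ε ↦ S(ε, λ) along the filter of neighborhoods of 0 within (0, ∞). Then s is antitone on (0, ∞): for all 0 < λ ≤ λ', s(λ') ≤ s(λ). -/

import Mathlib

open Filter Set

/-- Antitonicity of the limiting sample count s(λ)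
(property 2 of s(λ) in the proof of Theorem 4.1). -/
theorem limiting_sample_count_antitone {ι : Type*} [Nonempty ι] (r t : ι → ℝ)
    (C M : ℝ) (hr : ∀ i, |r i| ≤ C) (ht0 : ∀ i, 0 ≤ t i) (htM : ∀ i, t i ≤ M)
    (S : ℝ → ℝ → ℝ)
    (hS : ∀ ε lam : ℝ,
      S ε lam = sSup (t '' {i : ι | ∀ j, r i - lam * t i ≥ r j - lam * t j - ε}))
    (s : ℝ → ℝ)
    (hs : ∀ lam : ℝ,
      s lam = Filter.limsup (fun ε => S ε lam) (nhdsWithin 0 (Set.Ioi 0))) :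
    ∀ lam lam' : ℝ, 0 < lam → lam ≤ lam' → s lam' ≤ s lam := by
  intro lam lam' hlam hle
  rcases eq_or_lt_of_le hle with rfl | hlt
  · exact le_of_eq rfl
  set L := nhdsWithin (0:ℝ) (Set.Ioi 0) with hL
  haveI : L.NeBot := nhdsGT_neBot 0
  set d := lam' - lam with hd
  have hdpos : 0 < d := sub_pos.2 hlt
  -- image sets are bounded above by M
  have hbdd : ∀ (μ : ℝ) (ε : ℝ),
      BddAbove (t '' {i : ι | ∀ j, r i - μ * t i ≥ r j - μ * t j - ε}) := by
    intro μ ε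
    exact ⟨M, fun x ⟨i, _, hx⟩ => hx ▸ htM i⟩
  -- Opt sets are nonempty for ε > 0, μ > 0
  have hne : ∀ (μ : ℝ), 0 < μ → ∀ (ε : ℝ), 0 < ε →
      ∃ i : ι, ∀ j, r i - μ * t i ≥ r j - μ * t j - ε := by
    intro μ hμ ε hε
    set V := sSup (Set.range (fun i => r i - μ * t i)) with hV
    have hbV : BddAbove (Set.range (fun i => r i - μ * t i)) := by
      refine ⟨C, ?_⟩
      rintro x ⟨i, rfl⟩
      have h1 := (abs_le.1 (hr i)).2
      have h2 : 0 ≤ μ * t i := mul_nonneg hμ.le (ht0 i)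
      dsimp only
      linarith
    have hneV : (Set.range (fun i => r i - μ * t i)).Nonempty := Set.range_nonempty _
    obtain ⟨x, ⟨i, rfl⟩, hx⟩ := exists_lt_of_lt_csSup hneV (show V - ε < V by linarith)
    dsimp only at hx
    refine ⟨i, fun j => ?_⟩
    have hj : r j - μ * t j ≤ V := le_csSup hbV ⟨j, rfl⟩
    linarith
  -- bounds on S
  have hS0 : ∀ (μ : ℝ), 0 < μ → ∀ ε, 0 < ε → 0 ≤ S ε μ := by
    intro μ hμ ε hε
    obtain ⟨i, hi⟩ := hne μ hμ ε hε
    rw [hS]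
    exact le_trans (ht0 i) (le_csSup (hbdd μ ε) ⟨i, hi, rfl⟩)
  have hSM : ∀ (μ : ℝ) (ε : ℝ), 0 < ε → S ε μ ≤ max M 0 := by
    intro μ ε hε
    rw [hS]
    exact Real.sSup_le (fun x ⟨i, _, hx⟩ => hx ▸ le_max_of_le_left (htM i)) (le_max_right _ _)
  -- key inequality
  have key : ∀ ε : ℝ, 0 < ε → S ε lam' ≤ S ε lam + 2 * ε / d := by
    intro ε hε
    obtain ⟨j, hj⟩ := hne lam hlam ε hε
    rw [hS ε lam']
    refine Real.sSup_le ?_ ?_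
    · rintro x ⟨i, hi, rfl⟩
      have h1 : r i - lam' * t i ≥ r j - lam' * t j - ε := hi j
      have h2 : r j - lam * t j ≥ r i - lam * t i - ε := hj i
      have hti : t i ≤ t j + 2 * ε / d := by
        have h3 : (t i - t j) * d ≤ 2 * ε := by nlinarith
        have h4 : t i - t j ≤ 2 * ε / d := (le_div_iff₀ hdpos).2 h3
        linarith
      have htj : t j ≤ S ε lam := by
        rw [hS]
        exact le_csSup (hbdd lam ε) ⟨j, hj, rfl⟩
      linarith
    · have := hS0 lam hlam ε hε
      positivity
  -- boundedness facts on the filter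
  have hEv : ∀ᶠ ε in L, 0 < ε := eventually_mem_nhdsWithin
  have hbu : ∀ (μ : ℝ), IsBoundedUnder (· ≤ ·) L (fun ε => S ε μ) := by
    intro μ
    exact ⟨max M 0, hEv.mono fun ε hε => hSM μ ε hε⟩
  have hbl : IsBoundedUnder (· ≥ ·) L (fun ε => S ε lam) :=
    ⟨0, hEv.mono fun ε hε => hS0 lam hlam ε hε⟩
  have hv : Tendsto (fun ε : ℝ => 2 * ε / d) L (nhds 0) := by
    have h := (((continuous_const (y := (2:ℝ))).mul continuous_id).div_const d).tendsto 0
    simp only [Pi.mul_apply, id, mul_zero, zero_div] at h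
    exact h.mono_left nhdsWithin_le_nhds
  have hvlimsup : limsup (fun ε : ℝ => 2 * ε / d) L = 0 := hv.limsup_eq
  have hbv : IsBoundedUnder (· ≤ ·) L (fun ε : ℝ => 2 * ε / d) := hv.isBoundedUnder_le
  have hcv : IsCoboundedUnder (· ≤ ·) L (fun ε : ℝ => 2 * ε / d) :=
    hv.isBoundedUnder_ge.isCoboundedUnder_le
  have hbl' : IsBoundedUnder (· ≥ ·) L (fun ε => S ε lam') :=
    ⟨0, hEv.mono fun ε hε => hS0 lam' (hlam.trans hlt) ε hε⟩
  have hcg : IsCoboundedUnder (· ≤ ·) L (fun ε => S ε lam') :=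
    hbl'.isCoboundedUnder_le
  calc s lam' = limsup (fun ε => S ε lam') L := hs lam'
    _ ≤ limsup ((fun ε => S ε lam) + fun ε : ℝ => 2 * ε / d) L := by
        refine limsup_le_limsup (hEv.mono fun ε hε => key ε hε) hcg ?_
        exact isBoundedUnder_le_add (hbu lam) hbv
    _ ≤ limsup (fun ε => S ε lam) L + limsup (fun ε : ℝ => 2 * ε / d) L :=
        limsup_add_le hbl (hbu lam) hcv hbv
    _ = s lam := by rw [hvlimsup, hs lam, add_zero]
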